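/- arXiv:math/0409345 — 4 statements merged into one kernel-verified Lean document; each statement's English description precedes it below -/
import Mathlib

section
/- Let E be a number field with E ≠ ℚ which is not a CM field, and let Δ be a subgroup of finite index in the unit group 𝓞_E^×. Then the subfield of E generated by the images in E of the elements of Δ is equal to E itself. -/
open NumberField NumberField.Units
set_option maxSynthPendingDepth 2

/-- A field is totally real if every embedding into `ℂ` has image contained in `ℝ`. -/
def IsTotallyRealField (F : Type*) [Field F] : Prop :=
  ∀ (φ : F →+* ℂ) (x : F), (φ x).im = 0

/-- A field is totally imaginary if no embedding into `ℂ` has image contained in `ℝ`. -/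
def IsTotallyImaginaryField (E : Type*) [Field E] : Prop :=
  ∀ φ : E →+* ℂ, ∃ x : E, (φ x).im ≠ 0

/-- A number field is a CM field if it is a totally imaginary quadratic extension
of a totally real subfield. -/
def IsCMField (E : Type*) [Field E] : Prop :=
  ∃ F : Subfield E, IsTotallyRealField F ∧ IsTotallyImaginaryField E ∧
    Module.finrank F E = 2

-- aux: rank comparison
lemma rank_le_of_units_hom {E K : Type*} [Field E] [NumberField E] [Field K] [NumberField K]
    (ψ : (𝓞 E)ˣ →* (𝓞 K)ˣ) (h : ∀ u, ψ u ∈ torsion K → u ∈ torsion E) :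
    rank E ≤ rank K := by
  rw [← Units.rank_modTorsion, ← Units.rank_modTorsion]
  have hle : torsion E ≤ (torsion K).comap ψ := by
    intro u hu
    have : IsOfFinOrder u := (CommGroup.mem_torsion _).mp hu
    exact (CommGroup.mem_torsion _).mpr (ψ.isOfFinOrder this)
  let φ := QuotientGroup.map (torsion E) (torsion K) ψ hle
  have hinj : Function.Injective φ := by
    rw [← MonoidHom.ker_eq_bot_iff, eq_bot_iff]
    intro x hx
    obtain ⟨u, rfl⟩ := QuotientGroup.mk_surjective x
    rw [MonoidHom.mem_ker] at hx
    have : ψ u ∈ torsion K := by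
      rwa [QuotientGroup.map_mk, QuotientGroup.eq_one_iff] at hx
    rw [Subgroup.mem_bot, QuotientGroup.eq_one_iff]
    exact h u this
  let f : Additive ((𝓞 E)ˣ ⧸ torsion E) →ₗ[ℤ] Additive ((𝓞 K)ˣ ⧸ torsion K) :=
    AddMonoidHom.toIntLinearMap (MonoidHom.toAdditive φ)
  have hinjf : Function.Injective f := hinj
  exact LinearMap.finrank_le_finrank_of_injective hinjf


/-- If `E` is a number field, `E ≠ ℚ`, `E` is not CM, and `Δ` is a finite index subgroup
of the units of `𝓞 E`, then the subfield of `E` generated by (the images in `E` of)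
the elements of `Δ` is all of `E`. -/
theorem units_generate_field (E : Type*) [Field E] [NumberField E]
    (hE : 1 < Module.finrank ℚ E) (hCM : ¬ _root_.IsCMField E)
    (Δ : Subgroup (𝓞 E)ˣ) (hΔ : Δ.FiniteIndex) :
    Subfield.closure ((fun u : (𝓞 E)ˣ => algebraMap (𝓞 E) E (u : 𝓞 E)) ''
      (Δ : Set (𝓞 E)ˣ)) = ⊤ := by
  classical
  by_contra hne
  apply hCM
  set S : Set E := (fun u : (𝓞 E)ˣ => algebraMap (𝓞 E) E (u : 𝓞 E)) '' (Δ : Set (𝓞 E)ˣ)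
    with hS
  set K : Subfield E := Subfield.closure S with hKdef
  have hQmem : ∀ x : ℚ, algebraMap ℚ E x ∈ K := fun x => by
    rw [eq_ratCast]; exact SubfieldClass.ratCast_mem _ x
  set K' : IntermediateField ℚ E := K.toIntermediateField hQmem with hK'def
  have hmemK' : ∀ u : (𝓞 E)ˣ, u ∈ Δ → algebraMap (𝓞 E) E (u : 𝓞 E) ∈ K' :=
    fun u hu => Subfield.subset_closure ⟨u, hu, rfl⟩
  set n := Δ.index with hn
  have hn0 : 0 < n := Nat.pos_of_ne_zero hΔ.index_ne_zero
  have hint : ∀ (v : 𝓞 E) (hv : algebraMap (𝓞 E) E v ∈ K'),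
      IsIntegral ℤ (⟨algebraMap (𝓞 E) E v, hv⟩ : K') := fun v hv =>
    (isIntegral_algHom_iff (K'.val.toRingHom.toIntAlgHom) Subtype.val_injective).mp
      v.isIntegral_coe
  have hpow : ∀ u : (𝓞 E)ˣ, algebraMap (𝓞 E) E ((u ^ n : (𝓞 E)ˣ) : 𝓞 E) ∈ K' := fun u =>
    hmemK' _ (Δ.pow_index_mem u)
  have hpowinv : ∀ u : (𝓞 E)ˣ, algebraMap (𝓞 E) E (((u ^ n)⁻¹ : (𝓞 E)ˣ) : 𝓞 E) ∈ K' :=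
    fun u => hmemK' _ (Δ.inv_mem (Δ.pow_index_mem u))
  let g : (𝓞 E)ˣ → (𝓞 K')ˣ := fun u =>
    { val := ⟨⟨_, hpow u⟩, hint _ (hpow u)⟩
      inv := ⟨⟨_, hpowinv u⟩, hint _ (hpowinv u)⟩
      val_inv := RingOfIntegers.ext (Subtype.ext (by
        show algebraMap (𝓞 E) E ((u ^ n : (𝓞 E)ˣ) : 𝓞 E) *
          algebraMap (𝓞 E) E (((u ^ n)⁻¹ : (𝓞 E)ˣ) : 𝓞 E) = 1
        rw [← map_mul, ← Units.val_mul, mul_inv_cancel, Units.val_one, map_one]))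
      inv_val := RingOfIntegers.ext (Subtype.ext (by
        show algebraMap (𝓞 E) E (((u ^ n)⁻¹ : (𝓞 E)ˣ) : 𝓞 E) *
          algebraMap (𝓞 E) E ((u ^ n : (𝓞 E)ˣ) : 𝓞 E) = 1
        rw [← map_mul, ← Units.val_mul, inv_mul_cancel, Units.val_one, map_one])) }
  have hgval : ∀ u : (𝓞 E)ˣ,
      (algebraMap (𝓞 K') K' ((g u : (𝓞 K')) ) : E) = algebraMap (𝓞 E) E ((u ^ n : (𝓞 E)ˣ) : 𝓞 E) :=
    fun u => rfl
  have hgmul : ∀ u v : (𝓞 E)ˣ, g (u * v) = g u * g v := by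
    intro u v
    apply Units.ext
    apply RingOfIntegers.ext
    refine Subtype.ext ?_
    show algebraMap (𝓞 E) E (((u * v) ^ n : (𝓞 E)ˣ) : 𝓞 E) =
      algebraMap (𝓞 E) E ((u ^ n : (𝓞 E)ˣ) : 𝓞 E) * algebraMap (𝓞 E) E ((v ^ n : (𝓞 E)ˣ) : 𝓞 E)
    rw [← map_mul, ← Units.val_mul, ← mul_pow]
  let ψ : (𝓞 E)ˣ →* (𝓞 K')ˣ := MonoidHom.mk' g hgmul
  have hker : ∀ u : (𝓞 E)ˣ, ψ u ∈ torsion K' → u ∈ torsion E := by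
    intro u hu
    obtain ⟨k, hk0, hk⟩ := isOfFinOrder_iff_pow_eq_one.mp ((CommGroup.mem_torsion _).mp hu)
    have h1 : ψ (u ^ k) = 1 := by rw [map_pow, hk]
    have h5 : algebraMap (𝓞 E) E (((u ^ k) ^ n : (𝓞 E)ˣ) : 𝓞 E) = algebraMap (𝓞 E) E 1 :=
      congrArg (fun w : (𝓞 K')ˣ => ((algebraMap (𝓞 K') K' (w : 𝓞 K')) : E)) h1
    have h2 : ((u ^ k) ^ n : (𝓞 E)ˣ) = 1 := Units.ext (RingOfIntegers.coe_injective h5)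
    refine (CommGroup.mem_torsion _).mpr (isOfFinOrder_iff_pow_eq_one.mpr ⟨k * n, ?_, ?_⟩)
    · positivity
    · rw [pow_mul]; exact h2
  have hrank : rank E ≤ rank K' := rank_le_of_units_hom ψ hker
  -- counting argument
  have hc1 : 0 < Fintype.card (InfinitePlace E) := Fintype.card_pos
  have hc2 : 0 < Fintype.card (InfinitePlace K') := Fintype.card_pos
  have hcard : Fintype.card (InfinitePlace E) ≤ Fintype.card (InfinitePlace K') := by
    rw [rank, rank] at hrank; omega
  have hE1 : InfinitePlace.nrRealPlaces E + 2 * InfinitePlace.nrComplexPlaces E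
      = Module.finrank ℚ E := InfinitePlace.card_add_two_mul_card_eq_rank E
  have hK1 : InfinitePlace.nrRealPlaces ↥K' + 2 * InfinitePlace.nrComplexPlaces ↥K'
      = Module.finrank ℚ ↥K' := InfinitePlace.card_add_two_mul_card_eq_rank ↥K'
  have hE2 : Fintype.card (InfinitePlace E)
      = InfinitePlace.nrRealPlaces E + InfinitePlace.nrComplexPlaces E :=
    InfinitePlace.card_eq_nrRealPlaces_add_nrComplexPlaces E
  have hK2 : Fintype.card (InfinitePlace ↥K')
      = InfinitePlace.nrRealPlaces ↥K' + InfinitePlace.nrComplexPlaces ↥K' :=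
    InfinitePlace.card_eq_nrRealPlaces_add_nrComplexPlaces ↥K'
  have hK'ne : K' ≠ ⊤ := by
    intro h
    apply hne
    ext x
    simp only [Subfield.mem_top, iff_true]
    have hx : x ∈ K' := h ▸ IntermediateField.mem_top
    exact hx
  obtain ⟨z, hz⟩ : ∃ z : E, z ∉ K' := by
    by_contra h
    push_neg at h
    apply hK'ne
    ext x
    exact ⟨fun _ => trivial, fun _ => h x⟩
  have hdlt : Module.finrank ℚ ↥K' < Module.finrank ℚ E := by
    have hsub : Subalgebra.toSubmodule K'.toSubalgebra < ⊤ := by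
      rw [lt_top_iff_ne_top]
      intro h
      have hz2 : z ∈ Subalgebra.toSubmodule K'.toSubalgebra := h ▸ Submodule.mem_top
      exact hz hz2
    exact Submodule.finrank_lt hsub.ne
  have hmul : Module.finrank ℚ ↥K' * Module.finrank ↥K' E = Module.finrank ℚ E :=
    Module.finrank_mul_finrank ℚ ↥K' E
  have hd0 : 0 < Module.finrank ℚ ↥K' := Module.finrank_pos
  have hm2 : 2 ≤ Module.finrank ↥K' E := by
    by_contra hm
    push_neg at hm
    interval_cases h : Module.finrank ↥K' E <;> omega
  have h2d : 2 * Module.finrank ℚ ↥K' ≤ Module.finrank ℚ E := by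
    rw [← hmul, mul_comm (Module.finrank ℚ ↥K')]
    exact Nat.mul_le_mul_right _ hm2
  have hrE : InfinitePlace.nrRealPlaces E = 0 := by omega
  have hcK : InfinitePlace.nrComplexPlaces ↥K' = 0 := by omega
  have hn2d : Module.finrank ℚ E = 2 * Module.finrank ℚ ↥K' := by omega
  have hm : Module.finrank ↥K' E = 2 := by
    have := hmul
    rw [hn2d, mul_comm 2] at this
    exact Nat.eq_of_mul_eq_mul_left hd0 this
  refine ⟨K, ?_, ?_, ?_⟩
  · -- totally real
    intro φ x
    let φ' : ↥K' →+* ℂ := φ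
    have hwreal : InfinitePlace.IsReal (InfinitePlace.mk φ') := by
      rw [← InfinitePlace.not_isComplex_iff_isReal]
      intro hw
      rw [Fintype.card_eq_zero_iff] at hcK
      exact hcK.false ⟨InfinitePlace.mk φ', hw⟩
    rw [InfinitePlace.isReal_mk_iff] at hwreal
    have hx := RingHom.congr_fun (ComplexEmbedding.isReal_iff.mp hwreal) x
    erw [ComplexEmbedding.conjugate_coe_eq] at hx
    exact Complex.conj_eq_iff_im.mp hx
  · -- totally imaginary
    intro φ
    by_contra hcon
    push_neg at hcon
    have hφ : ComplexEmbedding.IsReal φ := by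
      rw [ComplexEmbedding.isReal_iff]
      ext x
      rw [ComplexEmbedding.conjugate_coe_eq]
      exact Complex.conj_eq_iff_im.mpr (hcon x)
    rw [Fintype.card_eq_zero_iff] at hrE
    exact hrE.false ⟨InfinitePlace.mk φ, InfinitePlace.isReal_mk_iff.mpr hφ⟩
  · exact hm
end

section
/- Let E be a number field and F a subfield of E such that the subgroup of 𝓞_E^× consisting of those units which lie in F has finite index in 𝓞_E^×. Then either F = E, or F is totally real and E is a totally imaginary quadratic extension of F (i.e., E has degree 2 over F, every field embedding of F into ℂ has image contained in ℝ, and no field embedding of E into ℂ has image contained in ℝ). -/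
open NumberField

/-- The subgroup of units of `𝓞 E` whose image in `E` lies in the subfield `F`. -/
def unitsIn (E : Type*) [Field E] [NumberField E] (F : Subfield E) : Subgroup (𝓞 E)ˣ where
  carrier := {u : (𝓞 E)ˣ | algebraMap (𝓞 E) E (u : 𝓞 E) ∈ F}
  one_mem' := by simpa using F.one_mem
  mul_mem' := by
    intro a b ha hb
    simpa [map_mul] using F.mul_mem ha hb
  inv_mem' := by
    intro a ha
    simp only [Set.mem_setOf_eq] at *
    have hmul : algebraMap (𝓞 E) E ((a : (𝓞 E)ˣ) : 𝓞 E) *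
        algebraMap (𝓞 E) E ((a⁻¹ : (𝓞 E)ˣ) : 𝓞 E) = 1 := by
      rw [← map_mul, Units.mul_inv, map_one]
    have h2 : algebraMap (𝓞 E) E ((a⁻¹ : (𝓞 E)ˣ) : 𝓞 E) =
        (algebraMap (𝓞 E) E ((a : (𝓞 E)ˣ) : 𝓞 E))⁻¹ :=
      eq_inv_of_mul_eq_one_right hmul
    rw [h2]
    exact F.inv_mem ha

set_option linter.unusedSectionVars false
set_option linter.unusedVariables false
set_option linter.unnecessarySimpa false
set_option maxSynthPendingDepth 2

section Aux
variable {E : Type*} [Field E] [NumberField E] (F : Subfield E)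

instance subfieldNumberField : NumberField F :=
  inferInstanceAs (NumberField (F.toIntermediateField fun x => by
    simpa using SubfieldClass.ratCast_mem F x : IntermediateField ℚ E))

lemma mapRingHom_injective :
    Function.Injective (RingOfIntegers.mapRingHom F.subtype : 𝓞 F →+* 𝓞 E) := fun x y hxy =>
  RingOfIntegers.ext (Subtype.coe_injective (congrArg (fun z : 𝓞 E => (z : E)) hxy))

/-- inclusion of unit groups -/
noncomputable def unitsIncl : (𝓞 F)ˣ →* (𝓞 E)ˣ :=
  Units.map (RingOfIntegers.mapRingHom F.subtype).toMonoidHom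

lemma unitsIncl_injective : Function.Injective (unitsIncl F) :=
  Units.map_injective (mapRingHom_injective F)

lemma unitsIncl_surjOn (u : (𝓞 E)ˣ) (hu : u ∈ unitsIn E F) :
    ∃ v : (𝓞 F)ˣ, unitsIncl F v = u := by
  have hu' : (u⁻¹ : (𝓞 E)ˣ) ∈ unitsIn E F := (unitsIn E F).inv_mem hu
  have hx : ((u : 𝓞 E) : E) ∈ F := hu
  have hx' : (((u⁻¹ : (𝓞 E)ˣ) : 𝓞 E) : E) ∈ F := hu'
  have hxi : IsIntegral ℤ (⟨_, hx⟩ : F) := by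
    rw [← isIntegral_algebraMap_iff (algebraMap F E).injective]
    exact (u : 𝓞 E).2
  have hxi' : IsIntegral ℤ (⟨_, hx'⟩ : F) := by
    rw [← isIntegral_algebraMap_iff (algebraMap F E).injective]
    exact ((u⁻¹ : (𝓞 E)ˣ) : 𝓞 E).2
  have hmulE : ((u : 𝓞 E) : E) * (((u⁻¹ : (𝓞 E)ˣ) : 𝓞 E) : E) = 1 := by
    rw [RingOfIntegers.coe_eq_algebraMap, RingOfIntegers.coe_eq_algebraMap,
      ← map_mul, Units.mul_inv, map_one]
  have hmul : (⟨_, hx⟩ : F) * ⟨_, hx'⟩ = 1 := Subtype.coe_injective (by simpa using hmulE)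
  have hmul' : (⟨_, hx'⟩ : F) * ⟨_, hx⟩ = 1 := by rw [mul_comm]; exact hmul
  refine ⟨⟨⟨_, hxi⟩, ⟨_, hxi'⟩, ?_, ?_⟩, ?_⟩
  · exact RingOfIntegers.ext hmul
  · exact RingOfIntegers.ext hmul'
  · exact Units.ext (RingOfIntegers.ext rfl)

end Aux

section Aux2
variable {E : Type*} [Field E] [NumberField E] (F : Subfield E)

lemma unitsIncl_torsion_iff (x : (𝓞 F)ˣ) :
    unitsIncl F x ∈ Units.torsion E ↔ x ∈ Units.torsion F := by
  rw [Units.torsion, Units.torsion, CommGroup.mem_torsion, CommGroup.mem_torsion,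
    isOfFinOrder_iff_pow_eq_one, isOfFinOrder_iff_pow_eq_one]
  constructor
  · rintro ⟨n, hn, hxn⟩
    refine ⟨n, hn, unitsIncl_injective F ?_⟩
    rw [map_pow, hxn, map_one]
  · rintro ⟨n, hn, hxn⟩
    exact ⟨n, hn, by rw [← map_pow, hxn, map_one]⟩

/-- induced map on quotients mod torsion -/
noncomputable def unitsInclQuot :
    (𝓞 F)ˣ ⧸ Units.torsion F →* (𝓞 E)ˣ ⧸ Units.torsion E :=
  QuotientGroup.map _ _ (unitsIncl F)
    (fun x hx => by simpa [Subgroup.mem_comap, unitsIncl_torsion_iff] using hx)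

lemma unitsInclQuot_injective : Function.Injective (unitsInclQuot F) := by
  rw [injective_iff_map_eq_one]
  intro a ha
  induction a using QuotientGroup.induction_on with
  | H x =>
    rw [show ((QuotientGroup.mk x : (𝓞 F)ˣ ⧸ Units.torsion F)) = (x : (𝓞 F)ˣ ⧸ Units.torsion F) from rfl] at *
    have : unitsInclQuot F (x : (𝓞 F)ˣ ⧸ Units.torsion F) = ((unitsIncl F x : (𝓞 E)ˣ) : (𝓞 E)ˣ ⧸ Units.torsion E) := rfl
    rw [this, QuotientGroup.eq_one_iff] at ha
    rw [QuotientGroup.eq_one_iff]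
    exact (unitsIncl_torsion_iff F x).mp ha

lemma rank_eq_of_finiteIndex (h : (unitsIn E F).FiniteIndex) :
    Units.rank F = Units.rank E := by
  have hle : Units.rank F ≤ Units.rank E := by
    rw [← Units.rank_modTorsion, ← Units.rank_modTorsion]
    exact LinearMap.finrank_le_finrank_of_injective
      (f := (MonoidHom.toAdditive (unitsInclQuot F)).toIntLinearMap)
      (unitsInclQuot_injective F)
  have hfin : (unitsInclQuot F).range.FiniteIndex := by
    have hdvd := Subgroup.index_map_dvd (unitsIn E F)
      (QuotientGroup.mk'_surjective (Units.torsion E))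
    have h0' : ((unitsIn E F).map (QuotientGroup.mk' (Units.torsion E))).index ≠ 0 := by
      intro h0
      rw [h0] at hdvd
      exact h.index_ne_zero (Nat.eq_zero_of_zero_dvd hdvd)
    haveI : ((unitsIn E F).map (QuotientGroup.mk' (Units.torsion E))).FiniteIndex := ⟨h0'⟩
    refine Subgroup.finiteIndex_of_le
      (H := (unitsIn E F).map (QuotientGroup.mk' (Units.torsion E))) ?_
    rintro _ ⟨u, hu, rfl⟩
    obtain ⟨v, rfl⟩ := unitsIncl_surjOn F u hu
    exact ⟨(v : (𝓞 F)ˣ ⧸ Units.torsion F), rfl⟩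
  have hge : Units.rank E ≤ Units.rank F := by
    set n := (unitsInclQuot F).range.index with hn
    have hn0 : n ≠ 0 := hfin.index_ne_zero
    set A := Additive ((𝓞 E)ˣ ⧸ Units.torsion E)
    let fl := (MonoidHom.toAdditive (unitsInclQuot F)).toIntLinearMap
    let g : A →ₗ[ℤ] A := (n : ℤ) • LinearMap.id
    have hg : Function.Injective g := by
      intro a b hab
      exact smul_right_injective A (r := (n : ℤ)) (by exact_mod_cast hn0) hab
    have hrange : LinearMap.range g ≤ LinearMap.range fl := by
      rintro _ ⟨a, rfl⟩
      have hm : (Additive.toMul a) ^ n ∈ (unitsInclQuot F).range :=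
        Subgroup.pow_index_mem _ _
      obtain ⟨q, hq⟩ := hm
      refine ⟨Additive.ofMul q, ?_⟩
      show Additive.ofMul (unitsInclQuot F q) = g a
      rw [hq]
      show Additive.ofMul ((Additive.toMul a) ^ n) = (n : ℤ) • a
      simp [ofMul_pow, natCast_zsmul]
    haveI : Module.Finite ℤ (LinearMap.range fl) := Module.Finite.range fl
    calc Units.rank E = Module.finrank ℤ A := (Units.rank_modTorsion E).symm
      _ = Module.finrank ℤ (LinearMap.range g) := (LinearMap.finrank_range_of_inj hg).symm
      _ ≤ Module.finrank ℤ (LinearMap.range fl) := Submodule.finrank_mono hrange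
      _ ≤ Module.finrank ℤ (Additive ((𝓞 F)ˣ ⧸ Units.torsion F)) := LinearMap.finrank_range_le fl
      _ = Units.rank F := Units.rank_modTorsion F
  omega

end Aux2

section Places
open NumberField.InfinitePlace

lemma totallyReal_of_nrComplexPlaces_eq_zero {K : Type*} [Field K] [NumberField K]
    (h : nrComplexPlaces K = 0) : IsTotallyRealField K := by
  classical
  intro φ x
  have hw : (mk φ).IsReal := by
    by_contra hc
    rw [not_isReal_iff_isComplex] at hc
    exact (Fintype.card_eq_zero_iff.mp h).elim ⟨_, hc⟩
  have hre : ComplexEmbedding.IsReal φ := isReal_mk_iff.mp hw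
  have := RingHom.congr_fun (ComplexEmbedding.isReal_iff.mp hre) x
  exact Complex.conj_eq_iff_im.mp this

lemma totallyImaginary_of_nrRealPlaces_eq_zero {K : Type*} [Field K] [NumberField K]
    (h : nrRealPlaces K = 0) : IsTotallyImaginaryField K := by
  classical
  intro ψ
  have hnr : ¬ ComplexEmbedding.IsReal ψ := by
    intro hr
    exact (Fintype.card_eq_zero_iff.mp h).elim ⟨_, isReal_mk_iff.mpr hr⟩
  rw [ComplexEmbedding.isReal_iff] at hnr
  by_contra hx
  push_neg at hx
  exact hnr (RingHom.ext fun x => Complex.conj_eq_iff_im.mpr (hx x))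

end Places


/-- If the units of `𝓞 E` lying in a subfield `F` form a finite-index subgroup of all units,
then either `F = E`, or `F` is totally real and `E` is a totally imaginary quadratic
extension of `F`. -/
theorem subfield_of_finiteIndex_units (E : Type*) [Field E] [NumberField E]
    (F : Subfield E) (h : (unitsIn E F).FiniteIndex) :
    F = ⊤ ∨ (IsTotallyRealField F ∧ Module.finrank F E = 2 ∧ IsTotallyImaginaryField E) := by
  classical
  haveI : IsScalarTower ℚ F E := IsScalarTower.of_algebraMap_eq' (Subsingleton.elim _ _)
  have hcard : Fintype.card (InfinitePlace F) = Fintype.card (InfinitePlace E) := by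
    have hr := rank_eq_of_finiteIndex F h
    have h1 : 0 < Fintype.card (InfinitePlace F) := Fintype.card_pos
    have h2 : 0 < Fintype.card (InfinitePlace E) := Fintype.card_pos
    unfold Units.rank at hr
    omega
  have hF := InfinitePlace.card_add_two_mul_card_eq_rank (K := F)
  have hE := InfinitePlace.card_add_two_mul_card_eq_rank (K := E)
  have hFc := InfinitePlace.card_eq_nrRealPlaces_add_nrComplexPlaces (K := F)
  have hEc := InfinitePlace.card_eq_nrRealPlaces_add_nrComplexPlaces (K := E)
  have hd : Module.finrank ℚ F * Module.finrank F E = Module.finrank ℚ E :=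
    Module.finrank_mul_finrank ℚ F E
  have hn : 0 < Module.finrank F E := Module.finrank_pos
  have hdF : 0 < Module.finrank ℚ F := Module.finrank_pos
  rcases eq_or_lt_of_le (Nat.succ_le_of_lt hn) with heq | hlt
  · -- finrank F E = 1, so F = ⊤
    left
    have hone : Module.finrank F E = 1 := heq.symm
    have hbot : (⊥ : Subalgebra F E) = ⊤ := Subalgebra.bot_eq_top_of_finrank_eq_one hone
    rw [eq_top_iff]
    intro x _
    have hx : x ∈ (⊥ : Subalgebra F E) := hbot.symm ▸ Algebra.mem_top
    obtain ⟨y, hy⟩ := Algebra.mem_bot.mp hx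
    have : algebraMap F E y = (y : E) := rfl
    rw [← hy, this]
    exact y.2
  · -- 2 ≤ finrank F E
    right
    have h2n : 2 ≤ Module.finrank F E := hlt
    have hmul : Module.finrank F E * Module.finrank ℚ F =
        InfinitePlace.nrRealPlaces E + 2 * InfinitePlace.nrComplexPlaces E := by
      rw [hE, ← hd, mul_comm]
    have key : InfinitePlace.nrRealPlaces E + 2 * InfinitePlace.nrComplexPlaces E ≤
        2 * Module.finrank ℚ F := by omega
    have hle2 : Module.finrank F E * Module.finrank ℚ F ≤ 2 * Module.finrank ℚ F := by
      rw [hmul]; exact key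
    have hn2 : Module.finrank F E ≤ 2 := Nat.le_of_mul_le_mul_right hle2 hdF
    have hn2' : Module.finrank F E = 2 := le_antisymm hn2 h2n
    rw [hn2'] at hmul
    have hcF : InfinitePlace.nrComplexPlaces F = 0 := by omega
    have hrE : InfinitePlace.nrRealPlaces E = 0 := by omega
    exact ⟨totallyReal_of_nrComplexPlaces_eq_zero hcF, hn2',
      totallyImaginary_of_nrRealPlaces_eq_zero hrE⟩
end

section
/- Let F be a totally real number field with F ≠ ℚ and let E be a totally imaginary quadratic extension of F. Then there exists a unit θ of 𝓞_F (which is in particular a unit of 𝓞_E lying in F) such that for every integer r ≥ 1 the subring ℤ[θ^r] generated by θ^r has finite index in the additive group of 𝓞_F. -/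
open NumberField IntermediateField

open Polynomial in
/-- If `x` generates `F` over `ℚ` as an algebra, then `ℤ[x]` has finite additive index
in `𝓞 F`. -/
lemma aux_finiteIndex_of_adjoin_eq_top {F : Type*} [Field F] [NumberField F] (x : 𝓞 F)
    (hx : Algebra.adjoin ℚ {(algebraMap (𝓞 F) F x)} = ⊤) :
    (Subring.closure {x}).toAddSubgroup.FiniteIndex := by
  set S := Subring.closure {x} with hS
  have key : ∀ y : 𝓞 F, ∃ n : ℕ, 0 < n ∧ n • y ∈ S := by
    intro y
    have hy : (algebraMap (𝓞 F) F y) ∈ Algebra.adjoin ℚ {(algebraMap (𝓞 F) F x)} := by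
      rw [hx]; trivial
    rw [Algebra.adjoin_singleton_eq_range_aeval] at hy
    obtain ⟨p, hp⟩ := hy
    obtain ⟨b, hb⟩ := IsLocalization.integerNormalization_map_to_map (nonZeroDivisors ℤ) p
    set q : ℤ[X] := IsLocalization.integerNormalization (nonZeroDivisors ℤ) p with hq
    have h1 : algebraMap (𝓞 F) F (aeval x q) = (b : ℤ) • algebraMap (𝓞 F) F y := by
      rw [← hp, ← aeval_algebraMap_apply, ← aeval_map_algebraMap ℚ, hb, map_zsmul]
      rfl
    have h2 : aeval x q = (b : ℤ) • y := by
      apply RingOfIntegers.coe_injective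
      rw [h1, map_zsmul]
    have hmem : aeval x q ∈ Algebra.adjoin ℤ ({x} : Set (𝓞 F)) := by
      rw [Algebra.adjoin_singleton_eq_range_aeval]; exact ⟨q, rfl⟩
    rw [Algebra.adjoin_int] at hmem
    have hmem' : ((b : ℤ) • y) ∈ S := by rw [← h2]; exact hmem
    have hb0 : (b : ℤ) ≠ 0 := nonZeroDivisors.coe_ne_zero b
    refine ⟨(b : ℤ).natAbs, Int.natAbs_pos.mpr hb0, ?_⟩
    rcases Int.natAbs_eq (b : ℤ) with h | h
    · rw [← natCast_zsmul, ← h]; exact hmem'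
    · have h' : (((b : ℤ).natAbs : ℤ)) = -(b : ℤ) := by omega
      rw [← natCast_zsmul, h', neg_zsmul]
      exact S.neg_mem hmem'
  haveI : AddGroup.FG (𝓞 F) := Module.Finite.iff_addGroup_fg.mp inferInstance
  haveI : Finite ((𝓞 F) ⧸ S.toAddSubgroup) := by
    apply AddCommGroup.finite_of_fg_torsion
    intro g
    obtain ⟨y, rfl⟩ := QuotientAddGroup.mk'_surjective S.toAddSubgroup g
    obtain ⟨n, hn, hmem⟩ := key y
    rw [isOfFinAddOrder_iff_nsmul_eq_zero]
    refine ⟨n, hn, ?_⟩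
    rw [← map_nsmul, QuotientAddGroup.mk'_apply, QuotientAddGroup.eq_zero_iff]
    exact hmem
  exact AddSubgroup.finiteIndex_of_finite_quotient

/-- If `F ≠ ℚ` is a totally real number field and `E` is a totally imaginary quadratic
extension of `F`, there is a unit `θ` of `𝓞 F` such that for every `r ≥ 1` the subring
`ℤ[θ^r]` has finite index in the additive group of `𝓞 F`. -/
theorem exists_unit_power_generates_finite_index_subring_CM
    (F E : Type*) [Field F] [NumberField F] [Field E] [NumberField E] [Algebra F E]
    (hF : IsTotallyRealField F) (hFQ : 1 < Module.finrank ℚ F)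
    (hquad : Module.finrank F E = 2) (hE : IsTotallyImaginaryField E) :
    ∃ θ : (𝓞 F)ˣ, ∀ r : ℕ, 1 ≤ r →
      (Subring.closure {((θ : 𝓞 F) ^ r)}).toAddSubgroup.FiniteIndex := by
  classical
  -- every complex embedding of F is real
  have hreal : ∀ φ : F →+* ℂ, ComplexEmbedding.IsReal φ := by
    intro φ
    rw [ComplexEmbedding.isReal_iff]
    ext z
    rw [ComplexEmbedding.conjugate_coe_eq]
    exact Complex.conj_eq_iff_im.mpr (hF φ z)
  have hmkinj : Function.Injective (InfinitePlace.mk : (F →+* ℂ) → InfinitePlace F) := by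
    intro φ ψ h
    rcases InfinitePlace.mk_eq_iff.mp h with h | h
    · exact h
    · rw [← h, ComplexEmbedding.isReal_iff.mp (hreal φ)]
  obtain ⟨w₁⟩ : Nonempty (InfinitePlace F) := inferInstance
  obtain ⟨u, hu⟩ := Units.dirichletUnitTheorem.exists_unit F w₁
  have hune : (algebraMap (𝓞 F) F (u : 𝓞 F)) ≠ 0 := fun h =>
    Units.ne_zero u (RingOfIntegers.coe_injective (h.trans (map_zero _).symm))
  have hupos : ∀ w : InfinitePlace F, 0 < w (algebraMap (𝓞 F) F (u : 𝓞 F)) :=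
    fun w => InfinitePlace.pos_iff.mpr hune
  -- the value at places other than w₁ is < 1
  have hu' : ∀ w : InfinitePlace F, w ≠ w₁ → w (algebraMap (𝓞 F) F (u : 𝓞 F)) < 1 := by
    intro w hw
    exact (Real.log_neg_iff (hupos w)).mp (hu w hw)
  -- there is another place
  have hw2 : ∃ w : InfinitePlace F, w ≠ w₁ := by
    have hcard : 1 < Fintype.card (F →+* ℂ) := by
      rw [Embeddings.card F ℂ]; exact hFQ
    obtain ⟨φ, hφ⟩ := Fintype.exists_ne_of_one_lt_card hcard w₁.embedding
    exact ⟨InfinitePlace.mk φ, fun h => hφ (hmkinj (by rw [h, InfinitePlace.mk_embedding]))⟩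
  -- product formula gives w₁ u > 1
  have hgt : 1 < w₁ (algebraMap (𝓞 F) F (u : 𝓞 F)) := by
    by_contra hle
    push_neg at hle
    have hnorm : |Algebra.norm ℚ (algebraMap (𝓞 F) F (u : 𝓞 F))| = 1 := by
      have := NumberField.isUnit_iff_norm.mp u.isUnit
      rwa [RingOfIntegers.coe_norm] at this
    have hprod : ∏ w : InfinitePlace F,
        (w (algebraMap (𝓞 F) F (u : 𝓞 F))) ^ (w.mult) = 1 := by
      rw [InfinitePlace.prod_eq_abs_norm, hnorm]
      norm_num
    obtain ⟨w', hw'⟩ := hw2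
    have herase : (Finset.univ.erase w₁).Nonempty := ⟨w', Finset.mem_erase.mpr ⟨hw', Finset.mem_univ _⟩⟩
    have hP : (∏ w ∈ Finset.univ.erase w₁,
        (w (algebraMap (𝓞 F) F (u : 𝓞 F))) ^ (w.mult)) < 1 := by
      have := Finset.prod_lt_prod_of_nonempty
        (f := fun w : InfinitePlace F => (w (algebraMap (𝓞 F) F (u : 𝓞 F))) ^ (w.mult))
        (g := fun _ => (1 : ℝ))
        (fun w _ => pow_pos (hupos w) _)
        (fun w hw => by
          have hlt := hu' w (Finset.mem_erase.mp hw).1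
          exact pow_lt_one₀ (le_of_lt (hupos w)) hlt InfinitePlace.mult_ne_zero)
        herase
      simpa using this
    have h1 : (1 : ℝ) = (w₁ (algebraMap (𝓞 F) F (u : 𝓞 F))) ^ (w₁.mult) *
        ∏ w ∈ Finset.univ.erase w₁, (w (algebraMap (𝓞 F) F (u : 𝓞 F))) ^ (w.mult) := by
      rw [← hprod]
      exact (Finset.mul_prod_erase _ _ (Finset.mem_univ w₁)).symm
    have hfw₁ : (w₁ (algebraMap (𝓞 F) F (u : 𝓞 F))) ^ (w₁.mult) ≤ 1 :=
      pow_le_one₀ (le_of_lt (hupos w₁)) hle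
    have hPpos : 0 < ∏ w ∈ Finset.univ.erase w₁,
        (w (algebraMap (𝓞 F) F (u : 𝓞 F))) ^ (w.mult) :=
      Finset.prod_pos fun w _ => pow_pos (hupos w) _
    nlinarith [h1, hfw₁, hP, hPpos]
  -- the main claim
  refine ⟨u, fun r hr => ?_⟩
  apply aux_finiteIndex_of_adjoin_eq_top
  by_contra hne
  set x' : F := algebraMap (𝓞 F) F ((u : 𝓞 F) ^ r) with hx'
  have hx'pow : x' = (algebraMap (𝓞 F) F (u : 𝓞 F)) ^ r := by rw [hx', map_pow]
  have hint : IsIntegral ℚ x' := IsIntegral.of_finite ℚ x'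
  set K : IntermediateField ℚ F := ℚ⟮x'⟯ with hK
  have hKsub : K.toSubalgebra = Algebra.adjoin ℚ {x'} :=
    IntermediateField.adjoin_simple_toSubalgebra_of_isAlgebraic hint.isAlgebraic
  haveI : FiniteDimensional K F := FiniteDimensional.right ℚ K F
  have hrank : 1 < Module.finrank K F := by
    rcases Nat.lt_or_ge 1 (Module.finrank K F) with h | h
    · exact h
    · exfalso
      have hpos : 0 < Module.finrank K F := Module.finrank_pos
      have h1 : Module.finrank K F = 1 := le_antisymm h hpos
      -- then K has full rank, so the adjoin is everything
      have := Module.finrank_mul_finrank ℚ K F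
      rw [h1, mul_one] at this
      apply hne
      rw [← hKsub]
      have : K.toSubalgebra.toSubmodule = ⊤ := by
        apply Submodule.eq_top_of_finrank_eq
        rw [← this]
        exact (IntermediateField.finrank_eq_finrank_subalgebra K).symm
      rw [Algebra.toSubmodule_eq_top] at this
      rw [this]
  -- set up a second embedding agreeing on K
  letI : Algebra K ℂ := (w₁.embedding.comp (algebraMap K F)).toAlgebra
  let σ : F →ₐ[K] ℂ := ⟨w₁.embedding, fun k => rfl⟩
  have hcard : 1 < Fintype.card (F →ₐ[K] ℂ) := by
    rw [AlgHom.card]; exact hrank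
  obtain ⟨ψ, hψ⟩ := Fintype.exists_ne_of_one_lt_card hcard σ
  have hψσ : (ψ : F →+* ℂ) ≠ w₁.embedding := by
    intro h
    apply hψ
    apply AlgHom.ext
    intro a
    exact DFunLike.congr_fun h a
  -- ψ and w₁.embedding agree on x'
  have hxK : x' ∈ K := IntermediateField.mem_adjoin_simple_self ℚ x'
  have hagree : ψ x' = w₁.embedding x' := by
    have : x' = algebraMap K F ⟨x', hxK⟩ := rfl
    rw [this, ψ.commutes]
    rfl
  -- the corresponding place
  set w' : InfinitePlace F := InfinitePlace.mk (ψ : F →+* ℂ) with hw'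
  have hw'ne : w' ≠ w₁ := by
    intro h
    apply hψσ
    apply hmkinj
    rw [← hw'] at *
    rw [h, InfinitePlace.mk_embedding]
  have hval : w' x' = w₁ x' := by
    rw [hw', ← InfinitePlace.mk_embedding w₁, InfinitePlace.apply, InfinitePlace.apply]
    exact congrArg (‖·‖) hagree
  have hlt : w' x' < 1 := by
    rw [hx'pow, map_pow]
    exact pow_lt_one₀ (le_of_lt (hupos w')) (hu' w' hw'ne) (by omega)
  have hgt' : 1 < w₁ x' := by
    rw [hx'pow, map_pow]
    exact one_lt_pow₀ hgt (by omega)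
  rw [hval] at hlt
  exact absurd hgt' (not_lt.mpr (le_of_lt hlt))
end

section
/- Let K be a number field with K ≠ ℚ which is not a CM field, and let θ ∈ 𝓞_K^× be a unit such that for every integer s ≥ 1 the subring ℤ[θ^s] has finite index in the additive group of 𝓞_K. Then for every integer r ≥ 1 there exists an integer N ≥ 1 such that the subgroup of SL(2, 𝓞_K) generated by the two matrices [[θ^r,0],[0,θ^{−r}]] and [[1,r],[0,1]] contains the matrix [[1,x],[0,1]] for every x ∈ N·𝓞_K. -/
open NumberField Matrix

variable (K : Type*) [Field K] [NumberField K]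

/-- The diagonal matrix `[[θ^r,0],[0,θ^{-r}]]` in `SL(2, 𝓞 K)`. -/
def diagPow (θ : (𝓞 K)ˣ) (r : ℕ) : SpecialLinearGroup (Fin 2) (𝓞 K) :=
  ⟨!![((θ ^ r : (𝓞 K)ˣ) : 𝓞 K), 0; 0, (((θ ^ r)⁻¹ : (𝓞 K)ˣ) : 𝓞 K)],
    by first
      | simp [Matrix.det_fin_two_of, ← mul_pow]
      | (simp [Matrix.det_fin_two_of]; rw [← mul_pow, Units.mul_inv, one_pow])⟩

/-- The matrix `[[1,x],[0,1]]` in `SL(2, 𝓞 K)`. -/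
def upperU (x : 𝓞 K) : SpecialLinearGroup (Fin 2) (𝓞 K) :=
  ⟨!![1, x; 0, 1], by simp [Matrix.det_fin_two_of]⟩

section Aux

variable {K : Type*} [Field K] [NumberField K]

lemma upperU_mul (a b : 𝓞 K) : upperU K a * upperU K b = upperU K (a + b) := by
  apply Subtype.ext
  show (!![1, a; 0, 1] : Matrix (Fin 2) (Fin 2) (𝓞 K)) * !![1, b; 0, 1] = !![1, a + b; 0, 1]
  refine Matrix.ext fun i j => ?_
  fin_cases i <;> fin_cases j <;>
    simp [Matrix.mul_apply, Fin.sum_univ_succ] <;> ring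

lemma upperU_zero : upperU K (0 : 𝓞 K) = 1 := by
  apply Subtype.ext
  show (!![1, (0 : 𝓞 K); 0, 1]) = (1 : Matrix (Fin 2) (Fin 2) (𝓞 K))
  refine Matrix.ext fun i j => ?_
  fin_cases i <;> fin_cases j <;> simp [Matrix.one_apply]

lemma upperU_inv (a : 𝓞 K) : (upperU K a)⁻¹ = upperU K (-a) :=
  inv_eq_of_mul_eq_one_right (by rw [upperU_mul, add_neg_cancel, upperU_zero])

lemma diag_conj (θ : (𝓞 K)ˣ) (r : ℕ) (a : 𝓞 K) :
    diagPow K θ r * upperU K a * (diagPow K θ r)⁻¹ =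
      upperU K (((θ ^ r : (𝓞 K)ˣ) : 𝓞 K) * ((θ ^ r : (𝓞 K)ˣ) : 𝓞 K) * a) := by
  have hv : ((θ : 𝓞 K)) ^ r * (((θ ^ r)⁻¹ : (𝓞 K)ˣ) : 𝓞 K) = 1 := by
    rw [← Units.val_pow_eq_pow_val, ← Units.val_mul, mul_inv_cancel, Units.val_one]
  rw [mul_inv_eq_iff_eq_mul]
  apply Subtype.ext
  show (!![((θ ^ r : (𝓞 K)ˣ) : 𝓞 K), 0; 0, (((θ ^ r)⁻¹ : (𝓞 K)ˣ) : 𝓞 K)]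
      * !![1, a; 0, 1] : Matrix (Fin 2) (Fin 2) (𝓞 K))
    = !![1, ((θ ^ r : (𝓞 K)ˣ) : 𝓞 K) * ((θ ^ r : (𝓞 K)ˣ) : 𝓞 K) * a; 0, 1]
      * !![((θ ^ r : (𝓞 K)ˣ) : 𝓞 K), 0; 0, (((θ ^ r)⁻¹ : (𝓞 K)ˣ) : 𝓞 K)]
  refine Matrix.ext fun i j => ?_
  fin_cases i <;> fin_cases j <;>
    simp [Matrix.mul_apply, Fin.sum_univ_succ]
  rw [← inv_pow, Units.val_pow_eq_pow_val] at hv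
  linear_combination (-((θ : 𝓞 K) ^ r * a)) * hv

end Aux

/-- Let `K ≠ ℚ` be a non-CM number field and `θ` a unit of `𝓞 K` whose positive powers
generate finite-index subrings `ℤ[θ^s]` of `𝓞 K`. Then for every `r ≥ 1` there is
`N ≥ 1` such that the subgroup of `SL(2, 𝓞 K)` generated by `[[θ^r,0],[0,θ^{-r}]]`
and `[[1,r],[0,1]]` contains `[[1,x],[0,1]]` for every `x ∈ N·𝓞 K`. -/
theorem SL2_two_generators_contain_unipotents
    (hK : 1 < Module.finrank ℚ K) (hCM : ¬ _root_.IsCMField K)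
    (θ : (𝓞 K)ˣ)
    (hθ : ∀ s : ℕ, 1 ≤ s → (Subring.closure {((θ : 𝓞 K) ^ s)}).toAddSubgroup.FiniteIndex)
    (r : ℕ) (hr : 1 ≤ r) :
    ∃ N : ℕ, 1 ≤ N ∧ ∀ y : 𝓞 K,
      upperU K ((N : 𝓞 K) * y) ∈
        Subgroup.closure {diagPow K θ r, upperU K (r : 𝓞 K)} := by
  classical
  set G : Subgroup (SpecialLinearGroup (Fin 2) (𝓞 K)) :=
    Subgroup.closure {diagPow K θ r, upperU K (r : 𝓞 K)} with hG
  have hD : diagPow K θ r ∈ G := Subgroup.subset_closure (by simp)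
  have hU : upperU K (r : 𝓞 K) ∈ G := Subgroup.subset_closure (by simp)
  set T : AddSubgroup (𝓞 K) :=
    { carrier := {z : 𝓞 K | upperU K ((r : 𝓞 K) * z) ∈ G}
      zero_mem' := by
        show upperU K ((r : 𝓞 K) * 0) ∈ G
        rw [mul_zero, upperU_zero]
        exact one_mem G
      add_mem' := by
        intro a b ha hb
        have ha' : upperU K ((r : 𝓞 K) * a) ∈ G := ha
        have hb' : upperU K ((r : 𝓞 K) * b) ∈ G := hb
        have h := mul_mem ha' hb'
        rw [upperU_mul, ← mul_add] at h
        exact h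
      neg_mem' := by
        intro a ha
        have ha' : upperU K ((r : 𝓞 K) * a) ∈ G := ha
        have h := inv_mem ha'
        rw [upperU_inv, ← mul_neg] at h
        exact h } with hT
  have hstep : ∀ z : 𝓞 K, z ∈ T → (θ : 𝓞 K) ^ r * (θ : 𝓞 K) ^ r * z ∈ T := by
    intro z hz
    have h := mul_mem (mul_mem hD hz) (inv_mem hD)
    rw [diag_conj θ r ((r : 𝓞 K) * z)] at h
    show upperU K _ ∈ G
    have he : (r : 𝓞 K) * ((θ : 𝓞 K) ^ r * (θ : 𝓞 K) ^ r * z) =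
        ((θ ^ r : (𝓞 K)ˣ) : 𝓞 K) * ((θ ^ r : (𝓞 K)ˣ) : 𝓞 K) * ((r : 𝓞 K) * z) := by
      rw [Units.val_pow_eq_pow_val]; ring
    rw [he]
    exact h
  set x : 𝓞 K := (θ : 𝓞 K) ^ (2 * r) with hx
  have hxpow : ∀ n : ℕ, x ^ n ∈ T := by
    intro n
    induction n with
    | zero =>
      show upperU K ((r : 𝓞 K) * (x ^ 0)) ∈ G
      rw [pow_zero, mul_one]
      exact hU
    | succ n ih =>
      have h := hstep _ ih
      have hx2 : (θ : 𝓞 K) ^ r * (θ : 𝓞 K) ^ r * x ^ n = x ^ (n + 1) := by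
        rw [hx, pow_succ, two_mul, pow_add]; ring
      rwa [hx2] at h
  have hclos : ∀ z : 𝓞 K, z ∈ Subring.closure {x} → z ∈ T := by
    set A : AddSubgroup (𝓞 K) := AddSubgroup.closure (Set.range (x ^ ·)) with hA
    have hmulA : ∀ a ∈ A, ∀ b ∈ A, a * b ∈ A := by
      intro a ha
      refine AddSubgroup.closure_induction ?_ ?_ ?_ ?_ ha
      · rintro _ ⟨n, rfl⟩ b hb
        refine AddSubgroup.closure_induction ?_ ?_ ?_ ?_ hb
        · rintro _ ⟨m, rfl⟩
          exact AddSubgroup.subset_closure ⟨n + m, by simp [pow_add]⟩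
        · rw [mul_zero]; exact zero_mem A
        · intro u v _ _ hu hv; rw [mul_add]; exact add_mem hu hv
        · intro u _ hu; rw [mul_neg]; exact neg_mem hu
      · intro b hb; rw [zero_mul]; exact zero_mem A
      · intro u v _ _ hu hv b hb; rw [add_mul]; exact add_mem (hu b hb) (hv b hb)
      · intro u _ hu b hb; rw [neg_mul]; exact neg_mem (hu b hb)
    have hsubA : ∀ z : 𝓞 K, z ∈ Subring.closure {x} → z ∈ A := by
      intro z hz
      refine Subring.closure_induction ?_ ?_ ?_ ?_ ?_ ?_ hz
      · rintro y rfl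
        exact AddSubgroup.subset_closure ⟨1, by simp⟩
      · exact zero_mem A
      · exact AddSubgroup.subset_closure ⟨0, by simp⟩
      · intro u v _ _ hu hv; exact add_mem hu hv
      · intro u _ hu; exact neg_mem hu
      · intro u v hu' hv' hu hv; exact hmulA u hu v hv
    intro z hz
    refine AddSubgroup.closure_induction ?_ ?_ ?_ ?_ (hsubA z hz)
    · rintro _ ⟨n, rfl⟩; exact hxpow n
    · exact zero_mem T
    · intro u v _ _ hu hv; exact add_mem hu hv
    · intro u _ hu; exact neg_mem hu
  have h2r : 1 ≤ 2 * r := by omega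
  have hFI := hθ (2 * r) h2r
  set m : ℕ := (Subring.closure {(θ : 𝓞 K) ^ (2 * r)}).toAddSubgroup.index with hm
  have hm0 : m ≠ 0 := hFI.index_ne_zero
  refine ⟨r * m, Nat.one_le_iff_ne_zero.mpr (Nat.mul_ne_zero (by omega) hm0), ?_⟩
  intro y
  have hmem : (m : 𝓞 K) * y ∈ Subring.closure {x} := by
    have h := AddSubgroup.nsmul_index_mem
      (Subring.closure {(θ : 𝓞 K) ^ (2 * r)}).toAddSubgroup y
    rwa [nsmul_eq_mul] at h
  have hfin := hclos _ hmem
  have hcast : ((r * m : ℕ) : 𝓞 K) * y = (r : 𝓞 K) * ((m : 𝓞 K) * y) := by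
    push_cast; ring
  rw [hcast]
  exact hfin
end
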